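/- (Two-blocks exchange estimate, part of Lemma 3.5) Fix a jump rate c with lower bound c₀ > 0, constants C > 0 and K ≥ 0, and let Λ be the subgraph of X with V_Λ := B(o,K), E_Λ := {e ∈ E : oe,te ∈ V_Λ}. Let ε > 0, m ≥ 1, and σ ∈ Γ with 2K < |σ|_Γ ≤ ε√t_m, and suppose the covering map X → X_m is injective on B(o,K+1) ∪ σB(o,K+1). Then for every μ ∈ P_{m,C} (identified with its Γ_m-periodic extension to Z) one has I^{(o,o)}_{Λ×Λ}(σ̂μ) ≤ (4C/c₀) ε², where σ̂μ is the pushforward of μ under η ↦ (η, σ⁻¹η). -/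

import Mathlib

open Filter Pointwise

namespace Tower

variable {Γ : Type} [Group Γ] [DecidableEq Γ]

/-- The ball of radius `n` about the identity in the Cayley graph of `(Γ, S)`, as a `Finset`:
products of at most `n` elements of `S`. -/
def ballF (S : Finset Γ) : ℕ → Finset Γ
  | 0 => {1}
  | n + 1 => ballF S n ∪ ballF S n * S

lemma one_mem_ballF (S : Finset Γ) (n : ℕ) : (1 : Γ) ∈ ballF S n := by
  induction n with
  | zero => simp [ballF]
  | succ n ih => exact Finset.mem_union_left _ ih

/-- The word norm of `x` with respect to `S`. -/
noncomputable def wordNorm (S : Finset Γ) (x : Γ) : ℕ := sInf {n | x ∈ ballF S n}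

/-- `(F i)` is a Følner sequence for `(Γ, S)`. -/
def IsFolner (S : Finset Γ) (F : ℕ → Finset Γ) : Prop :=
  (∀ i, (F i).Nonempty) ∧
    Tendsto (fun i => (((F i * S) \ F i).card : ℝ) / (F i).card) atTop (nhds 0)

/-- `b(K)`: the largest `i` such that `F i` is contained in the ball of radius `K` about `o`. -/
noncomputable def bFol (S : Finset Γ) (F : ℕ → Finset Γ) (K : ℝ) : ℕ :=
  sSup {i | ∀ x ∈ F i, (wordNorm S x : ℝ) ≤ K}

/-- Exchange the values of a configuration at two coordinates. -/
def exch {α : Type} [DecidableEq α] (x y : α) (η : α → Bool) : α → Bool :=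
  fun z => if z = x then η y else if z = y then η x else η z

/-- Exchange of values at two coordinates, on configurations restricted to a `Finset`. -/
def exchOn {α : Type} [DecidableEq α] (A : Finset α) (x y : α)
    (ζ : {a // a ∈ A} → Bool) : {a // a ∈ A} → Bool :=
  fun z => if (z : α) = x then (if h : y ∈ A then ζ ⟨y, h⟩ else ζ z)
    else if (z : α) = y then (if h : x ∈ A then ζ ⟨x, h⟩ else ζ z) else ζ z

/-- The type of generators. -/
abbrev Gen (S : Finset Γ) : Type _ := {s : Γ // s ∈ S}

/-- A `Γ`-invariant local function bundle for vertices `f : V × Z → ℝ` on the Cayley graph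
`X = (V, E)` of `(Γ, S)`, `V = Γ`, `Z = {0,1}^V`. -/
structure LocalBundleV (S : Finset Γ) : Type _ where
  f : Γ → (Γ → Bool) → ℝ
  r : ℕ
  localized : ∀ (x : Γ) (η η' : Γ → Bool),
    (∀ z ∈ (ballF S r).image (x * ·), η z = η' z) → f x η = f x η'
  invariant : ∀ (σ x : Γ) (η : Γ → Bool), f (σ * x) (fun z => η (σ⁻¹ * z)) = f x η

/-- A jump rate: a symmetric, non-degenerate `Γ`-invariant local function bundle for edges,
an edge being encoded as a pair `(x, s) : Γ × Gen S` with origin `x` and terminus `x * s`. -/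
structure JumpRate (S : Finset Γ) : Type _ where
  c : Γ → Gen S → (Γ → Bool) → ℝ
  c₀ : ℝ
  c₀_pos : 0 < c₀
  nondeg : ∀ x s η, c₀ ≤ c x s η
  r : ℕ
  localized : ∀ (x : Γ) (s : Gen S) (η η' : Γ → Bool),
    (∀ z ∈ (ballF S r).image (x * ·) ∪ (ballF S r).image (x * (s : Γ) * ·), η z = η' z) →
      c x s η = c x s η'
  invariant : ∀ (σ x : Γ) (s : Gen S) (η : Γ → Bool),
    c (σ * x) s (fun z => η (σ⁻¹ * z)) = c x s η
  symm_rev : ∀ (x : Γ) (s : Gen S) (h : (s : Γ)⁻¹ ∈ S) (η : Γ → Bool),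
    c (x * (s : Γ)) ⟨(s : Γ)⁻¹, h⟩ η = c x s η
  symm_exch : ∀ (x : Γ) (s : Gen S) (η : Γ → Bool),
    c x s (exch x (x * (s : Γ)) η) = c x s η

/-- `ρ`-Bernoulli weight on `{0,1}`. -/
def bw (ρ : ℝ) (b : Bool) : ℝ := if b then ρ else 1 - ρ

/-- Expectation with respect to the `ρ`-Bernoulli product measure `ν_ρ` of a cylinder function
depending only on the coordinates in the finite set `A`. -/
noncomputable def expCyl (ρ : ℝ) (A : Finset Γ) (g : (Γ → Bool) → ℝ) : ℝ :=
  ∑ ζ : ({a // a ∈ A} → Bool),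
    (∏ a : {a // a ∈ A}, bw ρ (ζ a)) *
      g (fun z => if h : z ∈ A then ζ ⟨z, h⟩ else false)

/-- The global average `⟨f_o⟩(ρ) = E_{ν_ρ}[f_o]`. -/
noncomputable def globalAvg {S : Finset Γ} (f : LocalBundleV S) (ρ : ℝ) : ℝ :=
  expCyl ρ (ballF S f.r) (f.f 1)

section Quot

variable (N : Subgroup Γ)

/-- The configuration space `Z_m = {0,1}^{V_m}` over the quotient graph `X_m = Γ_m \ X`. -/
abbrev Conf (N : Subgroup Γ) : Type _ := (Γ ⧸ N) → Bool

/-- The `Γ_m`-periodic extension of a configuration on `X_m` to `X`. -/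
def liftZ (η : Conf N) : Γ → Bool := fun x => η (QuotientGroup.mk x)

/-- The function on `V_m × Z_m` induced by a local function bundle. -/
noncomputable def fQ {S : Finset Γ} (f : LocalBundleV S) (v : Γ ⧸ N) (η : Conf N) : ℝ :=
  f.f (Quotient.out v) (liftZ N η)

/-- The jump rate induced on the quotient graph, on the edge `(v, v * s)`. -/
noncomputable def cQ {S : Finset Γ} (c : JumpRate S) (v : Γ ⧸ N) (s : Gen S) (η : Conf N) : ℝ :=
  c.c (Quotient.out v) s (liftZ N η)

variable [N.Normal]

/-- `η^e` on the quotient, for the edge `e = (v, v * s)`. -/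
def exchQ [DecidableEq (Γ ⧸ N)] (v : Γ ⧸ N) (s : Γ) (η : Conf N) : Conf N :=
  exch v (v * QuotientGroup.mk s) η

/-- The graph distance on the quotient graph `X_m`. -/
noncomputable def distQ (S : Finset Γ) (v w : Γ ⧸ N) : ℕ :=
  sInf {n | ∃ x ∈ ballF S n, v * QuotientGroup.mk x = w}

/-- The diameter of the quotient graph `X_m`. -/
noncomputable def diamQ (S : Finset Γ) : ℕ :=
  sSup {k | ∃ v w : Γ ⧸ N, distQ N S v w = k}

variable [Fintype (Γ ⧸ N)] [DecidableEq (Γ ⧸ N)]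

/-- `μ` is a probability measure on the finite configuration space `Z_m`. -/
def IsProb (μ : Conf N → ℝ) : Prop := (∀ η, 0 ≤ μ η) ∧ ∑ η, μ η = 1

/-- The action of `Γ/Γ_m` on `Z_m`. -/
def actQ (σ : Γ ⧸ N) (η : Conf N) : Conf N := fun z => η (σ⁻¹ * z)

/-- `μ` is `Γ/Γ_m`-invariant. -/
def IsInvariant (μ : Conf N → ℝ) : Prop := ∀ σ η, μ (actQ N σ η) = μ η

/-- The uniform ((1/2)-Bernoulli) measure `ν_m` on `Z_m`. -/
noncomputable def nuU : Conf N → ℝ := fun _ => (Fintype.card (Conf N) : ℝ)⁻¹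

/-- The density `φ = dμ/dν_m`. -/
noncomputable def dens (μ : Conf N → ℝ) : Conf N → ℝ :=
  fun η => (Fintype.card (Conf N) : ℝ) * μ η

/-- `√φ` where `φ = dμ/dν_m`. -/
noncomputable def sqrtDens (μ : Conf N → ℝ) : Conf N → ℝ :=
  fun η => Real.sqrt (dens N μ η)

/-- Expectation with respect to a probability measure on `Z_m`. -/
noncomputable def Emeas (μ : Conf N → ℝ) (g : Conf N → ℝ) : ℝ := ∑ η, μ η * g η

/-- The generator `L_m F (η) = Σ_{e ∈ E_m} c(e,η) (F(η^e) - F(η))`. -/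
noncomputable def Lgen {S : Finset Γ} (c : JumpRate S) (F : Conf N → ℝ) (η : Conf N) : ℝ :=
  ∑ e : (Γ ⧸ N) × Gen S, cQ N c e.1 e.2 η * (F (exchQ N e.1 (e.2 : Γ) η) - F η)

/-- The Dirichlet form `I_m(μ) = -∫ √φ L_m √φ dν_m`. -/
noncomputable def ImGen {S : Finset Γ} (c : JumpRate S) (μ : Conf N → ℝ) : ℝ :=
  - ∑ η, nuU N η * (sqrtDens N μ η * Lgen N c (sqrtDens N μ) η)

/-- The Dirichlet form in sum form:
`I_m(μ) = (1/2) Σ_{e ∈ E_m} ∫ c(e,η) (π_e √φ)² dν_m`. -/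
noncomputable def ImSum {S : Finset Γ} (c : JumpRate S) (μ : Conf N → ℝ) : ℝ :=
  (1 / 2) * ∑ e : (Γ ⧸ N) × Gen S, ∑ η, nuU N η *
    (cQ N c e.1 e.2 η * (sqrtDens N μ (exchQ N e.1 (e.2 : Γ) η) - sqrtDens N μ η) ^ 2)

/-- The local average `f̄_{v,i}` on the quotient, over the Følner set `Fi`. -/
noncomputable def fbarQ {S : Finset Γ} (f : LocalBundleV S) (Fi : Finset Γ) (v : Γ ⧸ N)
    (η : Conf N) : ℝ :=
  ((Fi.card : ℝ))⁻¹ * ∑ σ ∈ Fi, fQ N f (QuotientGroup.mk σ * v) η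

/-- The local particle density `η̄_{v,i}` on the quotient, over the Følner set `Fi`. -/
noncomputable def etabarQ (Fi : Finset Γ) (v : Γ ⧸ N) (η : Conf N) : ℝ :=
  ((Fi.card : ℝ))⁻¹ * ∑ σ ∈ Fi, (if η (QuotientGroup.mk σ * v) then (1 : ℝ) else 0)

/-- The image of `E⁰ = {e ∈ E : oe = o or te = o}` in `E_m`. -/
def E0Q (S : Finset Γ) : Finset ((Γ ⧸ N) × Gen S) :=
  Finset.univ.filter fun e => e.1 = 1 ∨ e.1 * QuotientGroup.mk (e.2 : Γ) = 1

/-- The marginal `μ|_Λ` on `Z_Λ = {0,1}^A` of a measure on `Z_m` (identified with its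
`Γ_m`-periodic extension). -/
noncomputable def marg (A : Finset Γ) (μ : Conf N → ℝ) (ζ : {a // a ∈ A} → Bool) : ℝ :=
  ∑ η : Conf N, if (∀ a : {a // a ∈ A}, liftZ N η (a : Γ) = ζ a) then μ η else 0

/-- The density `φ_Λ = d(μ|_Λ)/dν_Λ`. -/
noncomputable def margDens (A : Finset Γ) (μ : Conf N → ℝ) (ζ : {a // a ∈ A} → Bool) : ℝ :=
  (Fintype.card ({a // a ∈ A} → Bool) : ℝ) * marg N A μ ζ

/-- The restricted Dirichlet form
`I°_Λ(μ) = (1/2) Σ_{e ∈ E_Λ} ∫_{Z_Λ} (π_e √φ_Λ)² dν_Λ` for the subgraph `Λ = (A, Eset)`. -/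
noncomputable def IrestV {S : Finset Γ} (A : Finset Γ) (Eset : Finset (Γ × Gen S))
    (μ : Conf N → ℝ) : ℝ :=
  (1 / 2) * ∑ e ∈ Eset, ∑ ζ : ({a // a ∈ A} → Bool),
    (Fintype.card ({a // a ∈ A} → Bool) : ℝ)⁻¹ *
      (Real.sqrt (margDens N A μ (exchOn A e.1 (e.1 * (e.2 : Γ)) ζ)) -
        Real.sqrt (margDens N A μ ζ)) ^ 2

/-- The marginal on `Z_Λ × Z_Λ` of the pushforward `σ̂μ` of `μ` under `η ↦ (η, σ⁻¹η)`. -/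
noncomputable def margTwo (σ : Γ) (A : Finset Γ) (μ : Conf N → ℝ)
    (ζ ζ' : {a // a ∈ A} → Bool) : ℝ :=
  ∑ η : Conf N,
    if ((∀ a : {a // a ∈ A}, liftZ N η (a : Γ) = ζ a) ∧
        (∀ a : {a // a ∈ A}, liftZ N η (σ * (a : Γ)) = ζ' a)) then μ η else 0

/-- The density of `(σ̂μ)|_{Λ×Λ}` with respect to `ν_Λ ⊗ ν_Λ`. -/
noncomputable def margTwoDens (σ : Γ) (A : Finset Γ) (μ : Conf N → ℝ)
    (ζ ζ' : {a // a ∈ A} → Bool) : ℝ :=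
  ((Fintype.card ({a // a ∈ A} → Bool) : ℝ)) ^ 2 * margTwo N σ A μ ζ ζ'

/-- `I^{(o,o)}_{Λ×Λ}(σ̂μ) = (1/2) ∫ (π̃_{o,o} √(d(σ̂μ)|_{Λ×Λ}/d(ν_Λ⊗ν_Λ)))² d(ν_Λ⊗ν_Λ)`. -/
noncomputable def Ioo (σ : Γ) (A : Finset Γ) (h1 : (1 : Γ) ∈ A) (μ : Conf N → ℝ) : ℝ :=
  (1 / 2) * ∑ ζ : ({a // a ∈ A} → Bool), ∑ ζ' : ({a // a ∈ A} → Bool),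
    (((Fintype.card ({a // a ∈ A} → Bool) : ℝ)) ^ 2)⁻¹ *
      (Real.sqrt (margTwoDens N σ A μ (Function.update ζ ⟨1, h1⟩ (ζ' ⟨1, h1⟩))
          (Function.update ζ' ⟨1, h1⟩ (ζ ⟨1, h1⟩))) -
        Real.sqrt (margTwoDens N σ A μ ζ ζ')) ^ 2

/-- The two-block restricted Dirichlet form `I°_{Λ×Λ}(σ̂μ)`, i.e. the Dirichlet form of
`L°_Λ ⊗ 1 + 1 ⊗ L°_Λ` of the square root of the density of `(σ̂μ)|_{Λ×Λ}`. -/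
noncomputable def ItwoRest {S : Finset Γ} (σ : Γ) (A : Finset Γ) (Eset : Finset (Γ × Gen S))
    (μ : Conf N → ℝ) : ℝ :=
  (1 / 2) * ∑ e ∈ Eset, ∑ ζ : ({a // a ∈ A} → Bool), ∑ ζ' : ({a // a ∈ A} → Bool),
    (((Fintype.card ({a // a ∈ A} → Bool) : ℝ)) ^ 2)⁻¹ *
      ((Real.sqrt (margTwoDens N σ A μ (exchOn A e.1 (e.1 * (e.2 : Γ)) ζ) ζ') -
          Real.sqrt (margTwoDens N σ A μ ζ ζ')) ^ 2 +
        (Real.sqrt (margTwoDens N σ A μ ζ (exchOn A e.1 (e.1 * (e.2 : Γ)) ζ')) -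
          Real.sqrt (margTwoDens N σ A μ ζ ζ')) ^ 2)

end Quot

/-- The edge set `E_Λ` of the subgraph `Λ` spanned by the ball of radius `K`. -/
def ELam (S : Finset Γ) (K : ℕ) : Finset (Γ × Gen S) :=
  (ballF S K ×ˢ (Finset.univ : Finset (Gen S))).filter fun e => e.1 * (e.2 : Γ) ∈ ballF S K

section Aux

variable {α : Type} [DecidableEq α]

lemma exch_self (x : α) (η : α → Bool) : exch x x η = η := by
  funext z; unfold exch; split_ifs with h <;> simp_all

lemma exch_exch (x y : α) (η : α → Bool) : exch x y (exch x y η) = η := by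
  funext z; unfold exch; split_ifs <;> simp_all

lemma exch_bijective (x y : α) : Function.Bijective (exch x y : (α → Bool) → (α → Bool)) :=
  Function.bijective_iff_has_inverse.2
    ⟨exch x y, fun η => exch_exch x y η, fun η => exch_exch x y η⟩

lemma exch_conj {a b c : α} (hab : a ≠ b) (hbc : b ≠ c) (hac : a ≠ c) (η : α → Bool) :
    exch b c (exch a b (exch b c η)) = exch a c η := by
  funext z; unfold exch; split_ifs <;> simp_all

end Aux

section BallAux

variable {S : Finset Γ}

lemma ballF_mono_succ (S : Finset Γ) (n : ℕ) : ballF S n ⊆ ballF S (n + 1) := by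
  show ballF S n ⊆ ballF S n ∪ ballF S n * S
  exact Finset.subset_union_left

lemma mem_ballF_iff {n : ℕ} {x : Γ} :
    x ∈ ballF S n ↔ ∃ l : List Γ, (∀ a ∈ l, a ∈ S) ∧ l.length ≤ n ∧ l.prod = x := by
  induction n generalizing x with
  | zero =>
    show x ∈ ({1} : Finset Γ) ↔ _
    simp only [Finset.mem_singleton]
    constructor
    · rintro rfl; exact ⟨[], by simp⟩
    · rintro ⟨l, -, hl, rfl⟩
      have : l = [] := List.length_eq_zero_iff.1 (Nat.le_zero.1 hl)
      simp [this]
  | succ n ih =>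
    show x ∈ ballF S n ∪ ballF S n * S ↔ _
    rw [Finset.mem_union]
    constructor
    · rintro (h | h)
      · obtain ⟨l, h1, h2, h3⟩ := ih.1 h
        exact ⟨l, h1, h2.trans (Nat.le_succ n), h3⟩
      · obtain ⟨y, hy, s, hs, rfl⟩ := Finset.mem_mul.1 h
        obtain ⟨l, h1, h2, h3⟩ := ih.1 hy
        refine ⟨l ++ [s], ?_, by simpa using h2, by simp [h3]⟩
        intro a ha
        rcases List.mem_append.1 ha with h | h
        · exact h1 a h
        · simp at h; subst h; exact hs
    · rintro ⟨l, h1, h2, rfl⟩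
      rcases l.eq_nil_or_concat with rfl | ⟨L, b, rfl⟩
      · exact Or.inl (by simpa using ih.2 ⟨[], by simp⟩)
      · simp only [List.concat_eq_append] at h1 h2 ⊢
        refine Or.inr ?_
        rw [List.prod_append, List.prod_singleton]
        refine Finset.mul_mem_mul (ih.2 ⟨L, fun a ha => h1 a (by simp [ha]), ?_, rfl⟩)
          (h1 b (by simp))
        simpa using Nat.succ_le_succ_iff.1 (by simpa using h2)

lemma inv_mem_ballF (hS : ∀ s ∈ S, s⁻¹ ∈ S) {n : ℕ} {x : Γ} (hx : x ∈ ballF S n) :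
    x⁻¹ ∈ ballF S n := by
  obtain ⟨l, h1, h2, rfl⟩ := mem_ballF_iff.1 hx
  refine mem_ballF_iff.2 ⟨(l.map fun a => a⁻¹).reverse, ?_, by simp [h2],
    (List.prod_inv_reverse l).symm⟩
  intro a ha
  simp only [List.mem_reverse, List.mem_map] at ha
  obtain ⟨b, hb, rfl⟩ := ha
  exact hS b (h1 b hb)

lemma wordNorm_le {x : Γ} {n : ℕ} (h : x ∈ ballF S n) : wordNorm S x ≤ n := Nat.sInf_le h

end BallAux
section QuotAux

variable (N : Subgroup Γ) [N.Normal] [Fintype (Γ ⧸ N)] [DecidableEq (Γ ⧸ N)]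

/-- Single-exchange Dirichlet-type quantity `Σ_η (√μ(η^{ab}) − √μ(η))²`. -/
noncomputable def DDq (μ : Conf N → ℝ) (a b : Γ ⧸ N) : ℝ :=
  ∑ η : Conf N, (Real.sqrt (μ (exch a b η)) - Real.sqrt (μ η)) ^ 2

lemma DDq_nonneg (μ : Conf N → ℝ) (a b : Γ ⧸ N) : 0 ≤ DDq N μ a b :=
  Finset.sum_nonneg fun _ _ => sq_nonneg _

lemma actQ_actQ (τ τ' : Γ ⧸ N) (η : Conf N) :
    actQ N τ' (actQ N τ η) = actQ N (τ' * τ) η := by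
  funext z; simp [actQ, mul_assoc]

lemma actQ_one (η : Conf N) : actQ N 1 η = η := by funext z; simp [actQ]

lemma actQ_bijective (τ : Γ ⧸ N) : Function.Bijective (actQ N τ) :=
  Function.bijective_iff_has_inverse.2
    ⟨actQ N τ⁻¹, fun η => by rw [actQ_actQ, inv_mul_cancel, actQ_one],
      fun η => by rw [actQ_actQ, mul_inv_cancel, actQ_one]⟩

lemma actQ_exch (τ a b : Γ ⧸ N) (η : Conf N) :
    actQ N τ (exch a b η) = exch (τ * a) (τ * b) (actQ N τ η) := by
  funext z
  simp only [actQ, exch, inv_mul_eq_iff_eq_mul, inv_mul_cancel_left]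

lemma DDq_invariant {μ : Conf N → ℝ} (hinv : IsInvariant N μ) (τ a b : Γ ⧸ N) :
    DDq N μ a b = DDq N μ (τ * a) (τ * b) := by
  refine Fintype.sum_bijective (actQ N τ) (actQ_bijective N τ) _ _ fun η => ?_
  rw [← actQ_exch, hinv τ (exch a b η), hinv τ η]

lemma DDq_le_of_ImSum {S : Finset Γ} (c : JumpRate S) {μ : Conf N → ℝ}
    (hinv : IsInvariant N μ) {B : ℝ}
    (hI : ImSum N c μ ≤ B) (v : Γ ⧸ N) (s : Gen S) :
    DDq N μ v (v * QuotientGroup.mk (s : Γ)) ≤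
      2 * B / (c.c₀ * (Fintype.card (Γ ⧸ N) : ℝ)) := by
  have hcard : (0 : ℝ) < (Fintype.card (Γ ⧸ N) : ℝ) := by
    exact_mod_cast Fintype.card_pos
  have hZ : (0 : ℝ) < (Fintype.card (Conf N) : ℝ) := by
    exact_mod_cast Fintype.card_pos
  -- each summand of ImSum dominates c₀ times the DDq summand
  have key : c.c₀ * ∑ e : (Γ ⧸ N) × Gen S, DDq N μ e.1 (e.1 * QuotientGroup.mk (e.2 : Γ)) ≤
      2 * ImSum N c μ := by
    have h2 : 2 * ImSum N c μ = ∑ e : (Γ ⧸ N) × Gen S, ∑ η, nuU N η *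
        (cQ N c e.1 e.2 η * (sqrtDens N μ (exchQ N e.1 (e.2 : Γ) η) - sqrtDens N μ η) ^ 2) := by
      rw [ImSum]; ring
    rw [h2, Finset.mul_sum]
    refine Finset.sum_le_sum fun e _ => ?_
    rw [DDq, Finset.mul_sum]
    refine Finset.sum_le_sum fun η _ => ?_
    have hd : sqrtDens N μ (exchQ N e.1 (e.2 : Γ) η) - sqrtDens N μ η =
        Real.sqrt (Fintype.card (Conf N) : ℝ) *
          (Real.sqrt (μ (exch e.1 (e.1 * QuotientGroup.mk (e.2 : Γ)) η)) -
            Real.sqrt (μ η)) := by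
      show Real.sqrt (dens N μ _) - Real.sqrt (dens N μ _) = _
      rw [mul_sub, dens, dens, Real.sqrt_mul hZ.le, Real.sqrt_mul hZ.le]
      rfl
    have hnu : nuU N η = ((Fintype.card (Conf N) : ℝ))⁻¹ := rfl
    rw [hd, hnu, mul_pow, Real.sq_sqrt hZ.le]
    have hc₀ : c.c₀ ≤ cQ N c e.1 e.2 η := c.nondeg _ _ _
    have hsq : (0 : ℝ) ≤ (Real.sqrt (μ (exch e.1 (e.1 * QuotientGroup.mk (e.2 : Γ)) η)) -
        Real.sqrt (μ η)) ^ 2 := sq_nonneg _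
    calc c.c₀ * ((Real.sqrt _ - Real.sqrt _) ^ 2)
        ≤ cQ N c e.1 e.2 η * ((Real.sqrt _ - Real.sqrt _) ^ 2) := by
          exact mul_le_mul_of_nonneg_right hc₀ hsq
      _ = (Fintype.card (Conf N) : ℝ)⁻¹ *
          (cQ N c e.1 e.2 η * ((Fintype.card (Conf N) : ℝ) * _)) := by
          field_simp
  -- invariance: DDq at (v,s) equals DDq at (w,s) for every w
  have hDinv : ∀ w : Γ ⧸ N, DDq N μ w (w * QuotientGroup.mk (s : Γ)) =
      DDq N μ v (v * QuotientGroup.mk (s : Γ)) := by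
    intro w
    have h1 := DDq_invariant N hinv w 1 (QuotientGroup.mk (s : Γ))
    have h2 := DDq_invariant N hinv v 1 (QuotientGroup.mk (s : Γ))
    rw [mul_one] at h1 h2
    rw [← h1, h2]
  -- sum over all edges dominates card * single
  have hsum : (Fintype.card (Γ ⧸ N) : ℝ) * DDq N μ v (v * QuotientGroup.mk (s : Γ)) ≤
      ∑ e : (Γ ⧸ N) × Gen S, DDq N μ e.1 (e.1 * QuotientGroup.mk (e.2 : Γ)) := by
    rw [Fintype.sum_prod_type]
    calc (Fintype.card (Γ ⧸ N) : ℝ) * DDq N μ v (v * QuotientGroup.mk (s : Γ))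
        = ∑ w : Γ ⧸ N, DDq N μ w (w * QuotientGroup.mk (s : Γ)) := by
          rw [Finset.sum_congr rfl fun w _ => hDinv w, Finset.sum_const, Finset.card_univ,
            nsmul_eq_mul]
      _ ≤ ∑ w : Γ ⧸ N, ∑ s' : Gen S, DDq N μ w (w * QuotientGroup.mk (s' : Γ)) := by
          refine Finset.sum_le_sum fun w _ => ?_
          exact Finset.single_le_sum
            (f := fun s' : Gen S => DDq N μ w (w * QuotientGroup.mk (s' : Γ)))
            (fun s' _ => DDq_nonneg N μ _ _) (Finset.mem_univ s)
  have hc₀pos := c.c₀_pos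
  rw [le_div_iff₀ (by positivity : (0:ℝ) < c.c₀ * (Fintype.card (Γ ⧸ N) : ℝ))]
  nlinarith [mul_le_mul_of_nonneg_left hsum hc₀pos.le, key, hI]

end QuotAux
section PathAux

variable (N : Subgroup Γ) [N.Normal]

/-- The vertex sequence of a walk in the quotient graph. -/
def vtxs (v : Γ ⧸ N) : List Γ → List (Γ ⧸ N)
  | [] => [v]
  | s :: t => v :: vtxs (v * QuotientGroup.mk s) t

lemma vtxs_length (v : Γ ⧸ N) (l : List Γ) : (vtxs N v l).length = l.length + 1 := by
  induction l generalizing v with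
  | nil => rfl
  | cons s t ih => simp [vtxs, ih]

lemma self_mem_vtxs (v : Γ ⧸ N) (l : List Γ) : v ∈ vtxs N v l := by
  cases l <;> simp [vtxs]

lemma mk_prod_cons (s : Γ) (t : List Γ) (v : Γ ⧸ N) :
    v * QuotientGroup.mk ((s :: t).prod) =
      (v * QuotientGroup.mk s) * QuotientGroup.mk t.prod := by
  rw [List.prod_cons, QuotientGroup.mk_mul, mul_assoc]

lemma endpoint_mem_vtxs (v : Γ ⧸ N) (l : List Γ) :
    v * QuotientGroup.mk l.prod ∈ vtxs N v l := by
  induction l generalizing v with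
  | nil => simp [vtxs]
  | cons s t ih =>
    rw [mk_prod_cons]
    exact List.mem_cons_of_mem _ (ih _)

lemma vtxs_concat (v : Γ ⧸ N) (l : List Γ) (s : Γ) :
    vtxs N v (l ++ [s]) = vtxs N v l ++ [v * QuotientGroup.mk l.prod * QuotientGroup.mk s] := by
  induction l generalizing v with
  | nil => simp [vtxs]
  | cons a t ih =>
    show v :: vtxs N (v * QuotientGroup.mk a) (t ++ [s]) = _
    rw [ih]
    simp only [vtxs, List.cons_append, List.prod_cons, QuotientGroup.mk_mul, ← mul_assoc]

lemma vtxs_get (l : List Γ) (v : Γ ⧸ N) (i : ℕ) (h : i < (vtxs N v l).length) :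
    (vtxs N v l).get ⟨i, h⟩ = v * QuotientGroup.mk (l.take i).prod := by
  induction l generalizing v i with
  | nil =>
    have hi : i = 0 := by
      have h' : i < 1 := by simpa [vtxs] using h
      omega
    subst hi; simp [vtxs]
  | cons s t ih =>
    cases i with
    | zero => simp [vtxs]
    | succ i =>
      show (vtxs N (v * QuotientGroup.mk s) t).get ⟨i, _⟩ = _
      rw [ih]
      simp only [List.take_succ_cons, List.prod_cons, QuotientGroup.mk_mul, ← mul_assoc]

lemma head_ne_endpoint {v : Γ ⧸ N} {l : List Γ} (hl : l ≠ [])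
    (hnd : (vtxs N v l).Nodup) : v ≠ v * QuotientGroup.mk l.prod := by
  cases l with
  | nil => exact absurd rfl hl
  | cons s t =>
    have hnd' : v ∉ vtxs N (v * QuotientGroup.mk s) t := (List.nodup_cons.1 hnd).1
    intro hEq
    apply hnd'
    have h := endpoint_mem_vtxs N (v * QuotientGroup.mk s) t
    rw [← mk_prod_cons, ← hEq] at h
    exact h

lemma erase_loops_aux (S : Finset Γ) (n : ℕ)
    (ih : ∀ l : List Γ, l.length ≤ n → (∀ a ∈ l, a ∈ S) → ∀ v : Γ ⧸ N,
      ∃ l' : List Γ, (∀ a ∈ l', a ∈ S) ∧ l'.length ≤ l.length ∧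
        v * QuotientGroup.mk l'.prod = v * QuotientGroup.mk l.prod ∧ (vtxs N v l').Nodup)
    (l : List Γ) (hl : l.length ≤ n + 1) (hmem : ∀ a ∈ l, a ∈ S) (v : Γ ⧸ N)
    (i j : Fin (vtxs N v l).length) (hlt : i < j)
    (hij : (vtxs N v l).get i = (vtxs N v l).get j) :
    ∃ l' : List Γ, (∀ a ∈ l', a ∈ S) ∧ l'.length ≤ l.length ∧
      v * QuotientGroup.mk l'.prod = v * QuotientGroup.mk l.prod ∧ (vtxs N v l').Nodup := by
  have hjlen : (j : ℕ) ≤ l.length :=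
    Nat.lt_succ_iff.1 (lt_of_lt_of_le j.isLt (le_of_eq (vtxs_length N v l)))
  have hilt : (i : ℕ) < (j : ℕ) := hlt
  set l₂ : List Γ := l.take (i : ℕ) ++ l.drop (j : ℕ) with hl₂
  have hlen₂ : l₂.length = (i : ℕ) + (l.length - (j : ℕ)) := by
    rw [hl₂, List.length_append, List.length_take, List.length_drop,
      Nat.min_eq_left (by omega)]
  have hlen₂' : l₂.length < l.length := by omega
  have hmem₂ : ∀ a ∈ l₂, a ∈ S := by
    intro a ha
    rcases List.mem_append.1 ha with h | h
    · exact hmem a ((l.take_sublist _).mem h)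
    · exact hmem a ((l.drop_sublist _).mem h)
  have h1 : (vtxs N v l).get i = v * QuotientGroup.mk (l.take (i : ℕ)).prod :=
    vtxs_get N l v i i.isLt
  have h2 : (vtxs N v l).get j = v * QuotientGroup.mk (l.take (j : ℕ)).prod :=
    vtxs_get N l v j j.isLt
  have hkey : v * QuotientGroup.mk (l.take (i : ℕ)).prod =
      v * QuotientGroup.mk (l.take (j : ℕ)).prod := by rw [← h1, ← h2, hij]
  have hend : v * QuotientGroup.mk l₂.prod = v * QuotientGroup.mk l.prod := by
    conv_rhs => rw [← List.take_append_drop (j : ℕ) l]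
    rw [hl₂, List.prod_append, List.prod_append, QuotientGroup.mk_mul, QuotientGroup.mk_mul,
      ← mul_assoc, ← mul_assoc, hkey]
  obtain ⟨l', ha, hb, hc, hd⟩ := ih l₂ (by omega) hmem₂ v
  exact ⟨l', ha, by omega, hc.trans hend, hd⟩

/-- Loop erasure: any walk can be replaced by one with no repeated vertices. -/
lemma erase_loops (S : Finset Γ) : ∀ (n : ℕ) (l : List Γ), l.length ≤ n →
    (∀ a ∈ l, a ∈ S) → ∀ v : Γ ⧸ N, ∃ l' : List Γ, (∀ a ∈ l', a ∈ S) ∧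
      l'.length ≤ l.length ∧
      v * QuotientGroup.mk l'.prod = v * QuotientGroup.mk l.prod ∧ (vtxs N v l').Nodup := by
  intro n
  induction n with
  | zero =>
    intro l hl _ v
    have : l = [] := List.length_eq_zero_iff.1 (Nat.le_zero.1 hl)
    subst this
    exact ⟨[], by simp, le_refl _, rfl, by simp [vtxs]⟩
  | succ n ih =>
    intro l hl hmem v
    by_cases hnd : (vtxs N v l).Nodup
    · exact ⟨l, hmem, le_refl _, rfl, hnd⟩
    · rw [List.nodup_iff_injective_get] at hnd
      obtain ⟨i, j, hij, hne⟩ := Function.not_injective_iff.1 hnd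
      rcases lt_or_gt_of_ne hne with hlt | hlt
      · exact erase_loops_aux N S n ih l hl hmem v i j hlt hij
      · exact erase_loops_aux N S n ih l hl hmem v j i hlt hij.symm

end PathAux
section PathBound

variable (N : Subgroup Γ) [N.Normal] [Fintype (Γ ⧸ N)] [DecidableEq (Γ ⧸ N)]

lemma sq_split (t x y2 y1 y0 : ℝ) (ht : 0 < t) :
    (x - y0) ^ 2 ≤ (t + 2) * ((y2 - y1) ^ 2 / t + ((x - y2) ^ 2 + (y1 - y0) ^ 2)) := by
  have h : t * (x - y0) ^ 2 ≤
      (t + 2) * ((y2 - y1) ^ 2 + t * ((x - y2) ^ 2 + (y1 - y0) ^ 2)) := by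
    nlinarith [sq_nonneg (t * (x - y2) - (y2 - y1)), sq_nonneg (t * (y1 - y0) - (y2 - y1)),
      mul_nonneg ht.le (sq_nonneg ((x - y2) - (y1 - y0)))]
  have heq : (t + 2) * ((y2 - y1) ^ 2 / t + ((x - y2) ^ 2 + (y1 - y0) ^ 2)) =
      ((t + 2) * ((y2 - y1) ^ 2 + t * ((x - y2) ^ 2 + (y1 - y0) ^ 2))) / t := by
    have h2 : (y2 - y1) ^ 2 / t + ((x - y2) ^ 2 + (y1 - y0) ^ 2)
        = ((y2 - y1) ^ 2 + t * ((x - y2) ^ 2 + (y1 - y0) ^ 2)) / t := by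
      rw [add_div, mul_div_cancel_left₀ _ (ne_of_gt ht)]
    rw [h2, mul_div_assoc]
  rw [heq, le_div_iff₀ ht]
  linarith [h]

lemma DDq_conj {μ : Conf N → ℝ} {a b cc : Γ ⧸ N}
    (hab : a ≠ b) (hbc : b ≠ cc) (hac : a ≠ cc)
    {t Da Db : ℝ} (ht : 0 < t) (hDa : DDq N μ a b ≤ Da) (hDb : DDq N μ b cc ≤ Db) :
    DDq N μ a cc ≤ (t + 2) * (Da / t + 2 * Db) := by
  have hstep : ∀ η : Conf N,
      (Real.sqrt (μ (exch a cc η)) - Real.sqrt (μ η)) ^ 2 ≤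
        (t + 2) * ((Real.sqrt (μ (exch a b (exch b cc η))) -
            Real.sqrt (μ (exch b cc η))) ^ 2 / t +
          ((Real.sqrt (μ (exch b cc (exch a b (exch b cc η)))) -
              Real.sqrt (μ (exch a b (exch b cc η)))) ^ 2 +
            (Real.sqrt (μ (exch b cc η)) - Real.sqrt (μ η)) ^ 2)) := by
    intro η
    rw [← exch_conj hab hbc hac η]
    exact sq_split t _ _ _ _ ht
  have hsum : DDq N μ a cc ≤ (t + 2) * (DDq N μ a b / t + 2 * DDq N μ b cc) := by
    have hS1 : ∑ η : Conf N, (Real.sqrt (μ (exch a b (exch b cc η))) -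
        Real.sqrt (μ (exch b cc η))) ^ 2 = DDq N μ a b :=
      Fintype.sum_bijective (exch b cc) (exch_bijective b cc) _ _ fun η => rfl
    have hS2 : ∑ η : Conf N, (Real.sqrt (μ (exch b cc (exch a b (exch b cc η)))) -
        Real.sqrt (μ (exch a b (exch b cc η)))) ^ 2 = DDq N μ b cc :=
      Fintype.sum_bijective (fun η => exch a b (exch b cc η))
        ((exch_bijective a b).comp (exch_bijective b cc)) _ _ fun η => rfl
    calc DDq N μ a cc ≤ ∑ η : Conf N,
        (t + 2) * ((Real.sqrt (μ (exch a b (exch b cc η))) -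
            Real.sqrt (μ (exch b cc η))) ^ 2 / t +
          ((Real.sqrt (μ (exch b cc (exch a b (exch b cc η)))) -
              Real.sqrt (μ (exch a b (exch b cc η)))) ^ 2 +
            (Real.sqrt (μ (exch b cc η)) - Real.sqrt (μ η)) ^ 2)) :=
        Finset.sum_le_sum fun η _ => hstep η
      _ = (t + 2) * (DDq N μ a b / t + 2 * DDq N μ b cc) := by
        rw [← Finset.mul_sum]
        congr 1
        rw [Finset.sum_add_distrib, Finset.sum_add_distrib, ← Finset.sum_div, hS1, hS2]
        show _ + (_ + DDq N μ b cc) = _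
        ring
  refine hsum.trans ?_
  have h1 : DDq N μ a b / t ≤ Da / t := by gcongr
  have h2 : DDq N μ b cc ≤ Db := hDb
  nlinarith [ht]

lemma DDq_path {S : Finset Γ} {μ : Conf N → ℝ} {β : ℝ} (hβ : 0 ≤ β)
    (helem : ∀ (v : Γ ⧸ N) (s : Γ), s ∈ S →
      DDq N μ v (v * QuotientGroup.mk s) ≤ β) :
    ∀ l : List Γ, (∀ a ∈ l, a ∈ S) → ∀ v : Γ ⧸ N, (vtxs N v l).Nodup →
      DDq N μ v (v * QuotientGroup.mk l.prod) ≤ (2 * (l.length : ℝ)) ^ 2 * β := by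
  intro l
  induction l using List.reverseRecOn with
  | nil =>
    intro _ v _
    have h0 : DDq N μ v (v * QuotientGroup.mk (List.prod [])) = 0 := by
      have hv : v * QuotientGroup.mk (List.prod ([] : List Γ)) = v := by simp
      rw [hv, DDq]
      refine Finset.sum_eq_zero fun η _ => by rw [exch_self]; ring
    rw [h0]
    positivity
  | append_singleton l s ih =>
    intro hmem v hnd
    have hmem' : ∀ a ∈ l, a ∈ S := fun a ha => hmem a (by simp [ha])
    have hs : s ∈ S := hmem s (by simp)
    have hprod : v * QuotientGroup.mk ((l ++ [s]).prod) =
        (v * QuotientGroup.mk l.prod) * QuotientGroup.mk s := by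
      rw [List.prod_append, List.prod_singleton, QuotientGroup.mk_mul, mul_assoc]
    by_cases hl : l = []
    · subst hl
      simp only [List.nil_append]
      have h := helem v s hs
      have hp : QuotientGroup.mk (List.prod [s]) = (QuotientGroup.mk s : Γ ⧸ N) := by simp
      rw [hp]
      refine h.trans ?_
      have : ((List.length [s] : ℝ)) = 1 := by norm_num
      rw [this]
      nlinarith [hβ]
    · -- the three distinct vertices
      rw [vtxs_concat] at hnd
      rw [List.nodup_append] at hnd
      obtain ⟨hnd1, -, hdisj⟩ := hnd
      have hccnot : v * QuotientGroup.mk l.prod * QuotientGroup.mk s ∉ vtxs N v l := by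
        intro hmem2
        exact hdisj _ hmem2 _ (List.mem_singleton_self _) rfl
      have hab : v ≠ v * QuotientGroup.mk l.prod := head_ne_endpoint N hl hnd1
      have hbc : v * QuotientGroup.mk l.prod ≠ v * QuotientGroup.mk l.prod *
          QuotientGroup.mk s := fun h => hccnot (h ▸ endpoint_mem_vtxs N v l)
      have hac : v ≠ v * QuotientGroup.mk l.prod * QuotientGroup.mk s :=
        fun h => hccnot (h ▸ self_mem_vtxs N v l)
      have hlen1 : 1 ≤ l.length := List.length_pos_iff.2 hl
      have ht : (0 : ℝ) < 2 * (l.length : ℝ) := by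
        have : (1 : ℝ) ≤ (l.length : ℝ) := by exact_mod_cast hlen1
        linarith
      have hDa := ih hmem' v hnd1
      have hDb := helem (v * QuotientGroup.mk l.prod) s hs
      have hconj := DDq_conj N hab hbc hac ht hDa hDb
      rw [hprod]
      refine hconj.trans (le_of_eq ?_)
      have hlen : ((l ++ [s]).length : ℝ) = (l.length : ℝ) + 1 := by
        simp
      rw [hlen]
      have hne : (2 * (l.length : ℝ)) ≠ 0 := ne_of_gt ht
      field_simp

end PathBound
section Marginal

lemma sqrt_sum_sub_sqrt_sum_sq_le {ι : Type} [Fintype ι] (u w : ι → ℝ)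
    (hu : ∀ i, 0 ≤ u i) (hw : ∀ i, 0 ≤ w i) :
    (Real.sqrt (∑ i, u i) - Real.sqrt (∑ i, w i)) ^ 2 ≤
      ∑ i, (Real.sqrt (u i) - Real.sqrt (w i)) ^ 2 := by
  have hU : (0:ℝ) ≤ ∑ i, u i := Finset.sum_nonneg fun i _ => hu i
  have hW : (0:ℝ) ≤ ∑ i, w i := Finset.sum_nonneg fun i _ => hw i
  have hCS : (∑ i, Real.sqrt (u i) * Real.sqrt (w i)) ^ 2 ≤ (∑ i, u i) * (∑ i, w i) :=
    Finset.sum_sq_le_sum_mul_sum_of_sq_eq_mul Finset.univ (fun i _ => hu i) (fun i _ => hw i)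
      (fun i _ => by rw [mul_pow, Real.sq_sqrt (hu i), Real.sq_sqrt (hw i)])
  have hr : 0 ≤ ∑ i, Real.sqrt (u i) * Real.sqrt (w i) :=
    Finset.sum_nonneg fun i _ => mul_nonneg (Real.sqrt_nonneg _) (Real.sqrt_nonneg _)
  have h2 : ∑ i, Real.sqrt (u i) * Real.sqrt (w i) ≤
      Real.sqrt (∑ i, u i) * Real.sqrt (∑ i, w i) := by
    rw [← Real.sqrt_mul hU]
    have h3 := Real.sqrt_le_sqrt hCS
    rwa [Real.sqrt_sq hr] at h3
  have hexp : ∑ i, (Real.sqrt (u i) - Real.sqrt (w i)) ^ 2 =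
      (∑ i, u i) + (∑ i, w i) - 2 * ∑ i, Real.sqrt (u i) * Real.sqrt (w i) := by
    rw [Finset.mul_sum, ← Finset.sum_add_distrib, ← Finset.sum_sub_distrib]
    refine Finset.sum_congr rfl fun i _ => ?_
    rw [sub_sq, Real.sq_sqrt (hu i), Real.sq_sqrt (hw i)]
    ring
  rw [hexp, sub_sq, Real.sq_sqrt hU, Real.sq_sqrt hW]
  nlinarith [h2]

lemma update_pair_eq_iff {ι : Type} [DecidableEq ι] {β : Type} (o : ι) (ζ ζ' ξ ξ' : ι → β) :
    (Function.update ζ o (ζ' o) = Function.update ξ o (ξ' o) ∧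
     Function.update ζ' o (ζ o) = Function.update ξ' o (ξ o)) ↔ (ζ = ξ ∧ ζ' = ξ') := by
  constructor
  · rintro ⟨h1, h2⟩
    constructor
    · funext a
      by_cases ha : a = o
      · subst ha
        have h := congrFun h2 a
        simpa [Function.update_self] using h
      · have h := congrFun h1 a
        simpa [Function.update_of_ne ha] using h
    · funext a
      by_cases ha : a = o
      · subst ha
        have h := congrFun h1 a
        simpa [Function.update_self] using h
      · have h := congrFun h2 a
        simpa [Function.update_of_ne ha] using h
  · rintro ⟨rfl, rfl⟩; exact ⟨rfl, rfl⟩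

variable (N : Subgroup Γ) [N.Normal] [Fintype (Γ ⧸ N)] [DecidableEq (Γ ⧸ N)]

lemma Ioo_le_DDq (σ : Γ) (A : Finset Γ) (h1 : (1 : Γ) ∈ A)
    {μ : Conf N → ℝ} (hμ0 : ∀ η, 0 ≤ μ η)
    (hd1 : ∀ a ∈ A, (QuotientGroup.mk a : Γ ⧸ N) = QuotientGroup.mk 1 → a = 1)
    (hd2 : ∀ a ∈ A, (QuotientGroup.mk a : Γ ⧸ N) ≠ QuotientGroup.mk σ)
    (hd3 : ∀ a ∈ A, (QuotientGroup.mk (σ * a) : Γ ⧸ N) ≠ QuotientGroup.mk 1)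
    (hd4 : ∀ a ∈ A, (QuotientGroup.mk (σ * a) : Γ ⧸ N) = QuotientGroup.mk σ → a = 1) :
    Ioo N σ A h1 μ ≤
      (1 / 2) * DDq N μ (QuotientGroup.mk 1) (QuotientGroup.mk σ) := by
  classical
  set o : {a // a ∈ A} := ⟨1, h1⟩ with ho
  set T : Conf N → Conf N := exch (QuotientGroup.mk 1) (QuotientGroup.mk σ) with hT
  set F : Conf N → ({a // a ∈ A} → Bool) :=
    fun η a => η (QuotientGroup.mk (a : Γ)) with hFdef
  set G : Conf N → ({a // a ∈ A} → Bool) :=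
    fun η a => η (QuotientGroup.mk (σ * (a : Γ))) with hGdef
  have hTbij : Function.Bijective T := exch_bijective _ _
  -- the two key exchange identities on marginals
  have hF : ∀ η, F (T η) = Function.update (F η) o (G η o) := by
    intro η
    funext a
    by_cases ha : (a : Γ) = 1
    · have hao : a = o := Subtype.ext ha
      rw [hao, Function.update_self]
      show T η (QuotientGroup.mk ((1 : Γ))) = η (QuotientGroup.mk (σ * (1 : Γ)))
      rw [mul_one, hT]
      show (if (QuotientGroup.mk (1:Γ) : Γ ⧸ N) = QuotientGroup.mk 1 then
          η (QuotientGroup.mk σ) else if (QuotientGroup.mk (1:Γ) : Γ ⧸ N) = QuotientGroup.mk σ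
          then η (QuotientGroup.mk 1) else η (QuotientGroup.mk 1)) = η (QuotientGroup.mk σ)
      rw [if_pos rfl]
    · have h2 : (QuotientGroup.mk (a : Γ) : Γ ⧸ N) ≠ QuotientGroup.mk 1 :=
        fun h => ha (hd1 a a.2 h)
      have h3 : (QuotientGroup.mk (a : Γ) : Γ ⧸ N) ≠ QuotientGroup.mk σ := hd2 a a.2
      have h4 : a ≠ o := fun h => ha (by rw [h])
      rw [Function.update_of_ne h4]
      show T η (QuotientGroup.mk (a : Γ)) = η (QuotientGroup.mk (a : Γ))
      rw [hT]
      show (if (QuotientGroup.mk (a:Γ) : Γ ⧸ N) = QuotientGroup.mk 1 then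
          η (QuotientGroup.mk σ) else if (QuotientGroup.mk (a:Γ) : Γ ⧸ N) = QuotientGroup.mk σ
          then η (QuotientGroup.mk 1) else η (QuotientGroup.mk (a:Γ))) = η (QuotientGroup.mk (a:Γ))
      rw [if_neg h2, if_neg h3]
  have hG : ∀ η, G (T η) = Function.update (G η) o (F η o) := by
    intro η
    funext a
    by_cases ha : (a : Γ) = 1
    · have hao : a = o := Subtype.ext ha
      rw [hao, Function.update_self]
      show T η (QuotientGroup.mk (σ * (1 : Γ))) = η (QuotientGroup.mk ((1 : Γ)))
      have h2 : (QuotientGroup.mk (σ * (1:Γ)) : Γ ⧸ N) ≠ QuotientGroup.mk 1 := hd3 1 h1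
      have h3 : (QuotientGroup.mk (σ * (1:Γ)) : Γ ⧸ N) = QuotientGroup.mk σ := by rw [mul_one]
      rw [hT]
      show (if (QuotientGroup.mk (σ * (1:Γ)) : Γ ⧸ N) = QuotientGroup.mk 1 then
          η (QuotientGroup.mk σ) else if (QuotientGroup.mk (σ * (1:Γ)) : Γ ⧸ N) = QuotientGroup.mk σ
          then η (QuotientGroup.mk 1) else η (QuotientGroup.mk (σ * (1:Γ)))) = η (QuotientGroup.mk (1:Γ))
      rw [if_neg h2, if_pos h3]
    · have h2 : (QuotientGroup.mk (σ * (a : Γ)) : Γ ⧸ N) ≠ QuotientGroup.mk 1 := hd3 a a.2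
      have h3 : (QuotientGroup.mk (σ * (a : Γ)) : Γ ⧸ N) ≠ QuotientGroup.mk σ :=
        fun h => ha (hd4 a a.2 h)
      have h4 : a ≠ o := fun h => ha (by rw [h])
      rw [Function.update_of_ne h4]
      show T η (QuotientGroup.mk (σ * (a : Γ))) = η (QuotientGroup.mk (σ * (a : Γ)))
      rw [hT]
      show (if (QuotientGroup.mk (σ * (a:Γ)) : Γ ⧸ N) = QuotientGroup.mk 1 then
          η (QuotientGroup.mk σ) else if (QuotientGroup.mk (σ * (a:Γ)) : Γ ⧸ N) = QuotientGroup.mk σ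
          then η (QuotientGroup.mk 1) else η (QuotientGroup.mk (σ * (a:Γ)))) =
          η (QuotientGroup.mk (σ * (a:Γ)))
      rw [if_neg h2, if_neg h3]
  -- rewriting marginals as sums over configurations
  have claim2 : ∀ ζ ζ' : {a // a ∈ A} → Bool, margTwo N σ A μ ζ ζ' =
      ∑ η : Conf N, if (ζ = F η ∧ ζ' = G η) then μ η else 0 := by
    intro ζ ζ'
    rw [margTwo]
    refine Finset.sum_congr rfl fun η _ => ?_
    refine if_congr ?_ rfl rfl
    constructor
    · rintro ⟨h, h'⟩
      exact ⟨(funext fun a => (h a).symm), (funext fun a => (h' a).symm)⟩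
    · rintro ⟨rfl, rfl⟩
      exact ⟨fun a => rfl, fun a => rfl⟩
  have claim1 : ∀ ζ ζ' : {a // a ∈ A} → Bool,
      margTwo N σ A μ (Function.update ζ o (ζ' o)) (Function.update ζ' o (ζ o)) =
        ∑ η : Conf N, if (ζ = F η ∧ ζ' = G η) then μ (T η) else 0 := by
    intro ζ ζ'
    rw [claim2]
    refine (Fintype.sum_bijective T hTbij _ _ fun η => ?_).symm
    rw [hF, hG]
    refine if_congr ?_ rfl rfl
    exact (update_pair_eq_iff o ζ ζ' (F η) (G η)).symm
  -- the per-pair estimate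
  set κ : ℝ := (Fintype.card ({a // a ∈ A} → Bool) : ℝ) with hκdef
  have hκ : (0:ℝ) < κ := by rw [hκdef]; exact_mod_cast Fintype.card_pos
  have hden : ∀ ζ ζ' : {a // a ∈ A} → Bool,
      Real.sqrt (margTwoDens N σ A μ ζ ζ') = κ * Real.sqrt (margTwo N σ A μ ζ ζ') := by
    intro ζ ζ'
    rw [margTwoDens, Real.sqrt_mul (sq_nonneg κ), Real.sqrt_sq hκ.le]
  have perpair : ∀ ζ ζ' : {a // a ∈ A} → Bool,
      (κ ^ 2)⁻¹ *
        (Real.sqrt (margTwoDens N σ A μ (Function.update ζ o (ζ' o))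
            (Function.update ζ' o (ζ o))) -
          Real.sqrt (margTwoDens N σ A μ ζ ζ')) ^ 2 ≤
        ∑ η : Conf N, if (ζ = F η ∧ ζ' = G η) then
          (Real.sqrt (μ (T η)) - Real.sqrt (μ η)) ^ 2 else 0 := by
    intro ζ ζ'
    rw [hden, hden]
    have hfact : (κ * Real.sqrt (margTwo N σ A μ (Function.update ζ o (ζ' o))
          (Function.update ζ' o (ζ o))) - κ * Real.sqrt (margTwo N σ A μ ζ ζ')) ^ 2 =
        κ ^ 2 * (Real.sqrt (margTwo N σ A μ (Function.update ζ o (ζ' o))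
          (Function.update ζ' o (ζ o))) - Real.sqrt (margTwo N σ A μ ζ ζ')) ^ 2 := by
      ring
    rw [hfact, inv_mul_cancel_left₀ (by positivity)]
    rw [claim1, claim2]
    have hbound := sqrt_sum_sub_sqrt_sum_sq_le
      (fun η : Conf N => if (ζ = F η ∧ ζ' = G η) then μ (T η) else 0)
      (fun η : Conf N => if (ζ = F η ∧ ζ' = G η) then μ η else 0)
      (fun η => by split_ifs; exacts [hμ0 _, le_refl 0])
      (fun η => by split_ifs; exacts [hμ0 _, le_refl 0])
    refine hbound.trans (le_of_eq (Finset.sum_congr rfl fun η _ => ?_))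
    split_ifs
    · rfl
    · simp
  -- summing up
  rw [Ioo]
  have hmain : ∑ ζ : {a // a ∈ A} → Bool, ∑ ζ' : {a // a ∈ A} → Bool,
      (κ ^ 2)⁻¹ *
        (Real.sqrt (margTwoDens N σ A μ (Function.update ζ o (ζ' o))
            (Function.update ζ' o (ζ o))) -
          Real.sqrt (margTwoDens N σ A μ ζ ζ')) ^ 2 ≤
      DDq N μ (QuotientGroup.mk 1) (QuotientGroup.mk σ) := by
    refine le_trans
      (Finset.sum_le_sum fun ζ _ => Finset.sum_le_sum fun ζ' _ => perpair ζ ζ') (le_of_eq ?_)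
    rw [Finset.sum_congr rfl fun ζ _ => Finset.sum_comm, Finset.sum_comm]
    rw [DDq]
    refine Finset.sum_congr rfl fun η _ => ?_
    have hinner : ∀ ζ : {a // a ∈ A} → Bool,
        (∑ ζ' : {a // a ∈ A} → Bool, if (ζ = F η ∧ ζ' = G η) then
          (Real.sqrt (μ (T η)) - Real.sqrt (μ η)) ^ 2 else 0) =
        if ζ = F η then (Real.sqrt (μ (T η)) - Real.sqrt (μ η)) ^ 2 else 0 := by
      intro ζ
      by_cases hζ : ζ = F η
      · simp only [hζ, true_and]
        rw [Finset.sum_ite_eq' Finset.univ (G η)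
          (fun _ => (Real.sqrt (μ (T η)) - Real.sqrt (μ η)) ^ 2)]
        simp
      · simp [hζ]
    rw [Finset.sum_congr rfl fun ζ _ => hinner ζ]
    rw [Finset.sum_ite_eq' Finset.univ (F η)
      (fun _ => (Real.sqrt (μ (T η)) - Real.sqrt (μ η)) ^ 2)]
    simp [hT]
  have h12 : (0:ℝ) ≤ (1/2 : ℝ) := by norm_num
  exact mul_le_mul_of_nonneg_left hmain h12

end Marginal

/-- **Two-blocks exchange estimate** (part of Lemma 3.5): with `2K < |σ|_Γ ≤ ε√t_m` and the
covering map injective on `B(o,K+1) ∪ σB(o,K+1)`, for every `μ ∈ P_{m,C}` one has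
`I^{(o,o)}_{Λ×Λ}(σ̂μ) ≤ (4C/c₀) ε²`. -/
theorem two_blocks_exchange_estimate
    {Γ : Type} [Group Γ] [DecidableEq Γ] [Infinite Γ]
    (S : Finset Γ) (hS_symm : ∀ s ∈ S, s⁻¹ ∈ S)
    (hS_gen : Subgroup.closure (S : Set Γ) = ⊤)
    (Γs : ℕ → Subgroup Γ) [∀ m, (Γs m).Normal] [∀ m, (Γs m).FiniteIndex]
    [∀ m, Fintype (Γ ⧸ Γs m)] [∀ m, DecidableEq (Γ ⧸ Γs m)]
    (hdesc : ∀ m, Γs (m + 1) ≤ Γs m)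
    (hsep : ∀ x : Γ, (∀ m, x ∈ Γs m) → x = 1)
    (t : ℕ → ℝ) (ht_pos : ∀ m, 0 < t m) (ht_mono : StrictMono t)
    (ht_top : Tendsto t atTop atTop)
    (ht_diam : ∀ m, Real.sqrt (t m) ≤ 2 * (diamQ (Γs m) S : ℝ))
    (c : JumpRate S) (C : ℝ) (hC : 0 < C) (K : ℕ)
    (ε : ℝ) (hε : 0 < ε) (m : ℕ) (hm : 1 ≤ m) (σ : Γ)
    (hσL : 2 * K < wordNorm S σ)
    (hσU : (wordNorm S σ : ℝ) ≤ ε * Real.sqrt (t m))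
    (hinj : Set.InjOn (fun x : Γ => (QuotientGroup.mk x : Γ ⧸ Γs m))
      (↑(ballF S (K + 1) ∪ (ballF S (K + 1)).image (σ * ·))))
    (μ : Conf (Γs m) → ℝ) (hμ : IsProb (Γs m) μ) (hinv : IsInvariant (Γs m) μ)
    (hI : ImSum (Γs m) c μ ≤ C * ((Γs m).index : ℝ) / t m) :
    Ioo (Γs m) σ (ballF S K) (one_mem_ballF S K) μ ≤ 4 * C / c.c₀ * ε ^ 2 := by
    classical
  -- word norm facts for σ
  have hne : {n | σ ∈ ballF S n}.Nonempty := by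
    by_contra h
    rw [Set.not_nonempty_iff_eq_empty] at h
    have h0 : wordNorm S σ = 0 := by rw [wordNorm, h, Nat.sInf_empty]
    omega
  have hσball : σ ∈ ballF S (wordNorm S σ) := Nat.sInf_mem hne
  have hσK : σ ∉ ballF S K := fun h => by
    have := wordNorm_le h; omega
  have hσKinv : σ⁻¹ ∉ ballF S K := fun h => by
    have h2 : σ ∈ ballF S K := by simpa using inv_mem_ballF hS_symm h
    exact hσK h2
  -- membership facts for the injectivity set
  set U : Set Γ := ↑(ballF S (K + 1) ∪ (ballF S (K + 1)).image (σ * ·)) with hU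
  have hmem1 : ∀ a ∈ ballF S K, a ∈ U := by
    intro a ha
    rw [hU]
    simp only [Finset.coe_union, Set.mem_union, Finset.mem_coe]
    exact Or.inl (ballF_mono_succ S K ha)
  have hmem2 : ∀ a ∈ ballF S K, σ * a ∈ U := by
    intro a ha
    rw [hU]
    simp only [Finset.coe_union, Set.mem_union, Finset.mem_coe]
    exact Or.inr (Finset.mem_image.2 ⟨a, ballF_mono_succ S K ha, rfl⟩)
  have hmemσ : σ ∈ U := by
    have := hmem2 1 (one_mem_ballF S K)
    rwa [mul_one] at this
  -- distinctness hypotheses for the marginal contraction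
  have hd1 : ∀ a ∈ ballF S K, (QuotientGroup.mk a : Γ ⧸ Γs m) = QuotientGroup.mk 1 →
      a = 1 := by
    intro a ha h
    exact hinj (hmem1 a ha) (hmem1 1 (one_mem_ballF S K)) h
  have hd2 : ∀ a ∈ ballF S K, (QuotientGroup.mk a : Γ ⧸ Γs m) ≠ QuotientGroup.mk σ := by
    intro a ha h
    have haσ : a = σ := hinj (hmem1 a ha) hmemσ h
    exact hσK (haσ ▸ ha)
  have hd3 : ∀ a ∈ ballF S K, (QuotientGroup.mk (σ * a) : Γ ⧸ Γs m) ≠ QuotientGroup.mk 1 := by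
    intro a ha h
    have h2 : σ * a = 1 := hinj (hmem2 a ha) (hmem1 1 (one_mem_ballF S K)) h
    have h3 : σ = a⁻¹ := by rw [eq_inv_iff_mul_eq_one]; exact h2
    exact hσK (h3 ▸ inv_mem_ballF hS_symm ha)
  have hd4 : ∀ a ∈ ballF S K, (QuotientGroup.mk (σ * a) : Γ ⧸ Γs m) = QuotientGroup.mk σ →
      a = 1 := by
    intro a ha h
    have h2 : σ * a = σ * 1 := by
      refine hinj (hmem2 a ha) ?_ ?_
      · rw [mul_one]; exact hmemσ
      · show (QuotientGroup.mk (σ * a) : Γ ⧸ Γs m) = QuotientGroup.mk (σ * 1)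
        rw [mul_one]; exact h
    exact mul_left_cancel h2
  -- Step 1: marginal contraction
  have hstep1 := Ioo_le_DDq (Γs m) σ (ballF S K) (one_mem_ballF S K) hμ.1 hd1 hd2 hd3 hd4
  -- Step 2: elementary exchange bound
  have hc₀ := c.c₀_pos
  have htm := ht_pos m
  set β : ℝ := 2 * C / (c.c₀ * t m) with hβdef
  have hβ0 : 0 ≤ β := by positivity
  have helem : ∀ (v : Γ ⧸ Γs m) (s : Γ), s ∈ S →
      DDq (Γs m) μ v (v * QuotientGroup.mk s) ≤ β := by
    intro v s hs
    have h := DDq_le_of_ImSum (Γs m) c hinv hI v ⟨s, hs⟩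
    refine h.trans (le_of_eq ?_)
    have hidx : ((Γs m).index : ℝ) = (Fintype.card (Γ ⧸ Γs m) : ℝ) := by
      rw [Subgroup.index, Nat.card_eq_fintype_card]
    have hcard : (0:ℝ) < (Fintype.card (Γ ⧸ Γs m) : ℝ) := by exact_mod_cast Fintype.card_pos
    rw [hβdef, hidx]
    field_simp
  -- Step 3: the path estimate
  obtain ⟨l₀, hl₀S, hl₀len, hl₀prod⟩ := mem_ballF_iff.1 hσball
  obtain ⟨l', hl'S, hl'len, hl'end, hl'nd⟩ :=
    erase_loops (Γs m) S l₀.length l₀ le_rfl hl₀S (QuotientGroup.mk 1)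
  have hpath := DDq_path (Γs m) hβ0 helem l' hl'S (QuotientGroup.mk 1) hl'nd
  have hend : (QuotientGroup.mk 1 : Γ ⧸ Γs m) * QuotientGroup.mk l'.prod =
      QuotientGroup.mk σ := by
    rw [hl'end, hl₀prod, QuotientGroup.mk_one, one_mul]
  rw [hend] at hpath
  -- Step 4: numerics
  have hlen : (l'.length : ℝ) ≤ (wordNorm S σ : ℝ) := by
    exact_mod_cast hl'len.trans hl₀len
  have hlen0 : (0:ℝ) ≤ (l'.length : ℝ) := Nat.cast_nonneg _
  have hn0 : (0:ℝ) ≤ (wordNorm S σ : ℝ) := Nat.cast_nonneg _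
  have hsq : ((wordNorm S σ : ℝ))^2 ≤ ε^2 * t m := by
    have h4 : (ε * Real.sqrt (t m))^2 = ε^2 * t m := by
      rw [mul_pow, Real.sq_sqrt htm.le]
    nlinarith [hσU, Real.sqrt_nonneg (t m), hε.le]
  have hchain : (2 * (l'.length : ℝ))^2 * β ≤ 4 * (ε^2 * t m) * β := by
    have h5 : (2 * (l'.length : ℝ))^2 ≤ 4 * (ε^2 * t m) := by nlinarith
    nlinarith [hβ0]
  have hfinal : (1/2 : ℝ) * (4 * (ε^2 * t m) * β) = 4 * C / c.c₀ * ε^2 := by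
    rw [hβdef]
    field_simp
  calc Ioo (Γs m) σ (ballF S K) (one_mem_ballF S K) μ ≤
      (1/2) * DDq (Γs m) μ (QuotientGroup.mk 1) (QuotientGroup.mk σ) := hstep1
    _ ≤ (1/2) * ((2 * (l'.length : ℝ))^2 * β) := by linarith [hpath]
    _ ≤ (1/2) * (4 * (ε^2 * t m) * β) := by linarith [hchain]
    _ = 4 * C / c.c₀ * ε^2 := hfinal
end Tower
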